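/- Fix W ∈ ℂ^{M×N}, R_xs ∈ ℂ^{N×M}, Hermitian R_s ∈ ℂ^{M×M}, a Hermitian nominal matrix R̂_x ∈ ℂ^{N×N}, a Hermitian positive semidefinite matrix F ∈ ℂ^{N×N}, and ε₀ ≥ 0 with R̂_x − ε₀F positive semidefinite. Then the supremum of g(W; R_x, R_xs, R_s) over all Hermitian R_x satisfying R̂_x − ε₀F ⪯ R_x ⪯ R̂_x + ε₀F equals g(W; R̂_x, R_xs, R_s) + ε₀ Tr(W F Wᴴ), and it is attained at R_x = R̂_x + ε₀F. In particular, with F = I_N the distributionally robust linear estimation problem min_W max_{R_x} g(W; R_x, R_xs, R_s) is exactly the ridge regression problem min_W [g(W; R̂_x, R_xs, R_s) + ε₀ Tr(W Wᴴ)], and for general F ⪰ 0 it is the Tikhonov-regularized problem min_W [g(W; R̂_x, R_xs, R_s) + ε₀ Tr(W F Wᴴ)]. -/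

import Mathlib

open Matrix
open scoped ComplexOrder

lemma psd_trace_re_nonneg {n : ℕ} {A : Matrix (Fin n) (Fin n) ℂ} (hA : A.PosSemidef) :
    0 ≤ A.trace.re := by
  rw [Matrix.trace, Complex.re_sum]
  apply Finset.sum_nonneg
  intro i _
  have h := hA.dotProduct_mulVec_nonneg (Pi.single i 1)
  have h0 : star (Pi.single i 1) ⬝ᵥ A.mulVec (Pi.single i 1) = A i i := by
    simp [dotProduct, mulVec, Pi.single_apply, Finset.mul_sum]
  rw [h0] at h
  exact (Complex.le_def.mp h).1

/-- Over the (generalized) diagonal-loading uncertainty set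
`R̂_x − ε₀F ⪯ R_x ⪯ R̂_x + ε₀F`, the supremum of the beamforming objective
`g(W; R_x, R_xs, R_s) = Re Tr(W R_x Wᴴ − W R_xs − R_xsᴴ Wᴴ + R_s)` equals
`g(W; R̂_x, R_xs, R_s) + ε₀ Tr(W F Wᴴ)` and is attained at `R_x = R̂_x + ε₀F`.
In particular the distributionally robust problem is a ridge (`F = I`) or
Tikhonov-regularized problem. -/
theorem ridge_regression_distributionally_robust {N M : ℕ}
    (W : Matrix (Fin M) (Fin N) ℂ)
    (Rxs : Matrix (Fin N) (Fin M) ℂ) (Rs : Matrix (Fin M) (Fin M) ℂ)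
    (hRs : Rs.IsHermitian)
    (Rhatx F : Matrix (Fin N) (Fin N) ℂ)
    (hRhatx : Rhatx.IsHermitian) (hF : F.PosSemidef)
    (ε₀ : ℝ) (hε : 0 ≤ ε₀)
    (hlow : (Rhatx - ε₀ • F).PosSemidef) :
    (∀ Rx : Matrix (Fin N) (Fin N) ℂ, Rx.IsHermitian →
        (Rx - (Rhatx - ε₀ • F)).PosSemidef → ((Rhatx + ε₀ • F) - Rx).PosSemidef →
        ((W * Rx * Wᴴ - W * Rxs - Rxsᴴ * Wᴴ + Rs).trace).re
          ≤ ((W * Rhatx * Wᴴ - W * Rxs - Rxsᴴ * Wᴴ + Rs).trace).re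
              + ε₀ * ((W * F * Wᴴ).trace).re)
    ∧ ((W * (Rhatx + ε₀ • F) * Wᴴ - W * Rxs - Rxsᴴ * Wᴴ + Rs).trace).re
        = ((W * Rhatx * Wᴴ - W * Rxs - Rxsᴴ * Wᴴ + Rs).trace).re
            + ε₀ * ((W * F * Wᴴ).trace).re := by
  constructor
  · intro Rx hRx h1 h2
    have hpsd := h2.mul_mul_conjTranspose_same W
    have h3 := psd_trace_re_nonneg hpsd
    simp only [Matrix.mul_add, Matrix.add_mul, Matrix.mul_sub, Matrix.sub_mul,
      Matrix.mul_smul, Matrix.smul_mul, trace_add, trace_sub, trace_smul,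
      Complex.add_re, Complex.sub_re, Complex.smul_re, smul_eq_mul] at h3 ⊢
    linarith
  · simp only [Matrix.mul_add, Matrix.add_mul, Matrix.mul_sub, Matrix.sub_mul,
      Matrix.mul_smul, Matrix.smul_mul, trace_add, trace_sub, trace_smul,
      Complex.add_re, Complex.sub_re, Complex.smul_re, smul_eq_mul]
    ring
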